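/- Let G be a group and ρ : G → GL(n, ℂ) a representation such that ℂⁿ is semisimple as a representation of G (semisimple as a module over ℂ[G]). Let σ : ℂ → ℂ be a field automorphism such that σ(tr ρ(g)) = tr ρ(g) for every g ∈ G. Then the σ-conjugate representation ρ^σ : g ↦ σ(ρ(g)) (σ applied entrywise to the matrix ρ(g)) is isomorphic to ρ; that is, there exists T ∈ GL(n, ℂ) with σ(ρ(g)) = T ρ(g) T⁻¹ for all g ∈ G. -/

import Mathlib

set_option linter.unusedSectionVars false
set_option maxHeartbeats 1000000

open LinearMap Module

namespace BNaux

variable {A : Type*} [Ring A] [Algebra ℂ A]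

variable (A) in
/-- left multiplication by `a : A` as a `ℂ`-linear endomorphism, linearly in `a`. -/
noncomputable def lap (V : Type*) [AddCommGroup V] [Module ℂ V] [Module A V]
    [IsScalarTower ℂ A V] : A →ₗ[ℂ] (V →ₗ[ℂ] V) where
  toFun a :=
    { toFun := fun v => a • v
      map_add' := fun x y => smul_add a x y
      map_smul' := fun c v => by
        simp only [RingHom.id_apply]
        rw [← algebraMap_smul A c v, ← mul_smul, ← Algebra.commutes, mul_smul, algebraMap_smul] }
  map_add' a b := LinearMap.ext fun v => add_smul a b v
  map_smul' c a := LinearMap.ext fun v => smul_assoc c a v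

@[simp] lemma lap_apply (V : Type*) [AddCommGroup V] [Module ℂ V] [Module A V]
    [IsScalarTower ℂ A V] (a : A) (v : V) : lap A V a v = a • v := rfl

variable (A) in
/-- The character of an `A`-module. -/
noncomputable def chi (V : Type*) [AddCommGroup V] [Module ℂ V] [Module A V]
    [IsScalarTower ℂ A V] : A →ₗ[ℂ] ℂ :=
  (LinearMap.trace ℂ V).comp (lap A V)

section V
variable {V W : Type*} [AddCommGroup V] [Module ℂ V] [Module A V] [IsScalarTower ℂ A V]
  [AddCommGroup W] [Module ℂ W] [Module A W] [IsScalarTower ℂ A W]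

lemma chi_congr (e : V ≃ₗ[A] W) (a : A) : chi A V a = chi A W a := by
  have h : lap A W a = (e.restrictScalars ℂ).conj (lap A V a) := by
    ext x
    simp [LinearEquiv.conj_apply]
  rw [chi, chi, LinearMap.comp_apply, LinearMap.comp_apply, h, LinearMap.trace_conj']

lemma chi_prod [Module.Finite ℂ V] [Module.Finite ℂ W] (a : A) :
    chi A (V × W) a = chi A V a + chi A W a := by
  have h : lap A (V × W) a = (lap A V a).prodMap (lap A W a) := by
    ext x <;> rfl
  rw [chi, LinearMap.comp_apply, h, LinearMap.trace_prodMap']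
  rfl

lemma pi_isSemisimple [IsSemisimpleModule A V] (m : ℕ) :
    IsSemisimpleModule A (Fin m → V) := by
  apply isSemisimpleModule_of_isSemisimpleModule_submodule'
    (p := fun i : Fin m => LinearMap.range (LinearMap.single A (fun _ : Fin m => V) i))
  · intro i
    exact IsSemisimpleModule.range _
  · rw [eq_top_iff]
    intro x _
    rw [← Finset.univ_sum_single x]
    exact Submodule.sum_mem _ fun i _ =>
      Submodule.mem_iSup_of_mem i ⟨x i, rfl⟩

/-- Jacobson-density-style lemma: a `ℂ`-linear endomorphism commuting with all
`A`-endomorphisms agrees with some `a • ·` on any finite family of vectors. -/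
lemma exists_smul_eq_on [IsSemisimpleModule A V] (f : V →ₗ[ℂ] V)
    (hf : ∀ (φ : V →ₗ[A] V) (x : V), f (φ x) = φ (f x)) {m : ℕ} (x : Fin m → V) :
    ∃ a : A, ∀ i, a • x i = f (x i) := by
  haveI := pi_isSemisimple (A := A) (V := V) m
  set N : Submodule A (Fin m → V) := Submodule.span A {x} with hN
  obtain ⟨N', hc⟩ := exists_isCompl N
  set P : (Fin m → V) →ₗ[A] (Fin m → V) :=
    N.subtype.comp (N.linearProjOfIsCompl N' hc) with hP
  have hPx : P x = x := by
    have : N.linearProjOfIsCompl N' hc x = ⟨x, Submodule.mem_span_singleton_self x⟩ := by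
      exact Submodule.linearProjOfIsCompl_apply_left hc ⟨x, Submodule.mem_span_singleton_self x⟩
    simp [hP, this]
  have hmem : ∀ y, P y ∈ N := fun y => (N.linearProjOfIsCompl N' hc y).2
  -- commutation of P with the diagonal action of f
  have hcomm : ∀ (y : Fin m → V) (i : Fin m), f (P y i) = P (fun j => f (y j)) i := by
    intro y i
    set φ : Fin m → (V →ₗ[A] V) := fun j =>
      (LinearMap.proj i).comp (P.comp (LinearMap.single A (fun _ : Fin m => V) j)) with hφ
    have hy : ∀ (z : Fin m → V), P z i = ∑ j, φ j (z j) := by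
      intro z
      conv_lhs => rw [← Finset.univ_sum_single z]
      rw [map_sum]
      simp [hφ]
    rw [hy, hy, map_sum]
    congr 1
    ext j
    exact hf (φ j) (y j)
  have hfx : (fun i => f (x i)) ∈ N := by
    have : (fun i => f (x i)) = P (fun j => f (x j)) := by
      funext i
      rw [← hcomm x i, hPx]
    rw [this]
    exact hmem _
  rw [hN, Submodule.mem_span_singleton] at hfx
  obtain ⟨a, ha⟩ := hfx
  exact ⟨a, fun i => by rw [← congrFun ha i]; rfl⟩

lemma exists_lap_eq [IsSemisimpleModule A V] [FiniteDimensional ℂ V] (f : V →ₗ[ℂ] V)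
    (hf : ∀ (φ : V →ₗ[A] V) (x : V), f (φ x) = φ (f x)) :
    ∃ a : A, lap A V a = f := by
  let b := Module.finBasis ℂ V
  obtain ⟨a, ha⟩ := exists_smul_eq_on (A := A) f hf (fun i => b i)
  exact ⟨a, b.ext fun i => ha i⟩

/-- nonzero hom from a semisimple module yields a common simple-ish pair -/
lemma exists_common_sub [IsSemisimpleModule A V] (f : V →ₗ[A] W) (hf : f ≠ 0) :
    ∃ (S : Submodule A V) (S' : Submodule A W),
      Nontrivial S ∧ Nonempty (S ≃ₗ[A] S') := by
  have htop : sSup {m : Submodule A V | IsSimpleModule A m} = ⊤ :=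
    IsSemisimpleModule.sSup_simples_eq_top A V
  have hne : ∃ p : {m : Submodule A V | IsSimpleModule A m}, Submodule.map f (p : Submodule A V) ≠ ⊥ := by
    by_contra h
    push_neg at h
    have : Submodule.map f ⊤ = ⊥ := by
      rw [← htop, sSup_eq_iSup', Submodule.map_iSup]
      simp only [h, iSup_bot]
    rw [Submodule.map_top] at this
    exact hf (LinearMap.range_eq_bot.mp this)
  obtain ⟨⟨p, hp⟩, hmap⟩ := hne
  haveI : IsSimpleModule A p := hp
  set g : p →ₗ[A] W := f.comp p.subtype with hg
  have hrange : LinearMap.range g = Submodule.map f p := by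
    rw [hg, LinearMap.range_comp, Submodule.range_subtype]
  have hgne : g ≠ 0 := by
    intro h0
    rw [h0] at hrange
    rw [LinearMap.range_zero] at hrange
    exact hmap hrange.symm
  have hinj : Function.Injective g := LinearMap.injective_of_ne_zero hgne
  refine ⟨p, LinearMap.range g, IsSimpleModule.nontrivial A p, ⟨LinearEquiv.ofInjective g hinj⟩⟩

lemma fd_submodule [FiniteDimensional ℂ V] (S : Submodule A V) : FiniteDimensional ℂ S := by
  haveI : FiniteDimensional ℂ (S.restrictScalars ℂ) := inferInstance
  exact Module.Finite.equiv ((Submodule.restrictScalarsEquiv ℂ A V S).restrictScalars ℂ)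

/-- products of semisimple modules are semisimple -/
lemma prod_isSemisimple [IsSemisimpleModule A V] [IsSemisimpleModule A W] :
    IsSemisimpleModule A (V × W) := by
  apply isSemisimpleModule_of_isSemisimpleModule_submodule'
    (p := fun b : Bool => if b then LinearMap.range (LinearMap.inl A V W)
      else LinearMap.range (LinearMap.inr A V W))
  · rintro (_|_)
    · simpa using IsSemisimpleModule.range (LinearMap.inr A V W)
    · simpa using IsSemisimpleModule.range (LinearMap.inl A V W)
  · rw [iSup_bool_eq]
    exact LinearMap.sup_range_inl_inr
end V

/-- Brauer–Nesbitt: semisimple f.d. modules with equal characters are isomorphic. -/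
lemma bn (d : ℕ) : ∀ (V W : Type) [AddCommGroup V] [AddCommGroup W] [Module ℂ V] [Module ℂ W]
    [Module A V] [Module A W] [IsScalarTower ℂ A V] [IsScalarTower ℂ A W]
    [FiniteDimensional ℂ V] [FiniteDimensional ℂ W]
    [IsSemisimpleModule A V] [IsSemisimpleModule A W],
    finrank ℂ V + finrank ℂ W ≤ d → (∀ a : A, chi A V a = chi A W a) →
    Nonempty (V ≃ₗ[A] W) := by
  induction d with
  | zero =>
    intro V W _ _ _ _ _ _ _ _ _ _ _ _ hd hx
    have h1 : finrank ℂ V = 0 := by omega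
    have h2 : finrank ℂ W = 0 := by omega
    haveI : Subsingleton V := Module.finrank_zero_iff.mp h1
    haveI : Subsingleton W := Module.finrank_zero_iff.mp h2
    exact ⟨LinearEquiv.ofSubsingleton V W⟩
  | succ d ih =>
    intro V W _ _ _ _ _ _ _ _ _ _ _ _ hd hx
    by_cases h0 : finrank ℂ V = 0
    · -- V trivial, use character at 1 to conclude W trivial
      haveI : Subsingleton V := Module.finrank_zero_iff.mp h0
      have hV1 : chi A V 1 = 0 := by
        have : lap A V (1 : A) = 0 := Subsingleton.elim _ _
        simp [chi, this]
      have hW1 : chi A W 1 = (finrank ℂ W : ℂ) := by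
        have : lap A W (1 : A) = LinearMap.id := by
          ext x; simp
        simp [chi, this, LinearMap.trace_id]
      have : (finrank ℂ W : ℂ) = 0 := by rw [← hW1, ← hx 1, hV1]
      haveI : Subsingleton W := Module.finrank_zero_iff.mp (by exact_mod_cast this)
      exact ⟨LinearEquiv.ofSubsingleton V W⟩
    · haveI hVnt : Nontrivial V := Module.finrank_pos_iff.mp (Nat.pos_of_ne_zero h0)
      -- there must exist a nonzero hom in some direction
      have hhom : ¬ ((∀ φ : V →ₗ[A] W, φ = 0) ∧ (∀ ψ : W →ₗ[A] V, ψ = 0)) := by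
        rintro ⟨h1, h2⟩
        haveI : IsSemisimpleModule A (V × W) := prod_isSemisimple
        set f : (V × W) →ₗ[ℂ] (V × W) := (LinearMap.inl ℂ V W).comp (LinearMap.fst ℂ V W) with hfdef
        have hf : ∀ (φ : (V × W) →ₗ[A] (V × W)) (x : V × W), f (φ x) = φ (f x) := by
          intro φ x
          have h12 : (LinearMap.fst A V W).comp (φ.comp (LinearMap.inr A V W)) = 0 := h2 _
          have h21 : (LinearMap.snd A V W).comp (φ.comp (LinearMap.inl A V W)) = 0 := h1 _
          have hx1 : x = (x.1, 0) + (0, x.2) := by simp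
          have hφ1 : (φ (x.1, 0)).2 = 0 := by
            have := LinearMap.ext_iff.mp h21 x.1
            simpa using this
          have hφ2 : (φ (0, x.2)).1 = 0 := by
            have := LinearMap.ext_iff.mp h12 x.2
            simpa using this
          have hφx : φ x = φ (x.1, 0) + φ (0, x.2) := by rw [← map_add, ← hx1]
          have : f (φ x) = ((φ (x.1, 0)).1 + (φ (0, x.2)).1, 0) := by
            rw [hφx]; simp [hfdef]
          rw [this, hφ2, add_zero]
          have : f x = (x.1, 0) := by simp [hfdef]
          rw [this]
          exact Prod.ext rfl hφ1.symm
        obtain ⟨a, ha⟩ := exists_lap_eq (A := A) f hf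
        have haV : ∀ v : V, a • v = v := by
          intro v
          have := congrArg Prod.fst (congrFun (congrArg DFunLike.coe ha) (v, 0))
          simpa [hfdef] using this
        have haW : ∀ w : W, a • w = 0 := by
          intro w
          have := congrArg Prod.snd (congrFun (congrArg DFunLike.coe ha) (0, w))
          simpa [hfdef] using this
        have hchiV : chi A V a = (finrank ℂ V : ℂ) := by
          have : lap A V a = LinearMap.id := by ext v; simp [haV v]
          simp [chi, this, LinearMap.trace_id]
        have hchiW : chi A W a = 0 := by
          have : lap A W a = 0 := by ext w; simp [haW w]
          simp [chi, this]
        have : (finrank ℂ V : ℂ) = 0 := by rw [← hchiV, hx a, hchiW]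
        exact h0 (by exact_mod_cast this)
      -- extract a common pair of isomorphic nontrivial submodules
      obtain ⟨S, S', hSnt, ⟨e⟩⟩ :
          ∃ (S : Submodule A V) (S' : Submodule A W), Nontrivial S ∧ Nonempty (S ≃ₗ[A] S') := by
        rw [not_and_or] at hhom
        rcases hhom with h | h
        · push_neg at h
          obtain ⟨φ, hφ⟩ := h
          exact exists_common_sub φ hφ
        · push_neg at h
          obtain ⟨ψ, hψ⟩ := h
          obtain ⟨S', S, hnt, ⟨e⟩⟩ := exists_common_sub ψ hψ
          haveI := hnt
          haveI : Nontrivial S := e.toEquiv.symm.nontrivial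
          exact ⟨S, S', this, ⟨e.symm⟩⟩
      haveI hS'nt : Nontrivial S' := e.symm.toEquiv.nontrivial
      obtain ⟨V', hV'⟩ := exists_isCompl S
      obtain ⟨W', hW'⟩ := exists_isCompl S'
      haveI := fd_submodule (A := A) (V := V) S
      haveI := fd_submodule (A := A) (V := V) V'
      haveI := fd_submodule (A := A) (V := W) S'
      haveI := fd_submodule (A := A) (V := W) W'
      have eV : (S × V') ≃ₗ[A] V := Submodule.prodEquivOfIsCompl S V' hV'
      have eW : (S' × W') ≃ₗ[A] W := Submodule.prodEquivOfIsCompl S' W' hW'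
      have hchiV' : ∀ a : A, chi A V a = chi A S a + chi A V' a := fun a => by
        rw [← chi_congr eV a, chi_prod]
      have hchiW' : ∀ a : A, chi A W a = chi A S' a + chi A W' a := fun a => by
        rw [← chi_congr eW a, chi_prod]
      have hxa : ∀ a : A, chi A V' a = chi A W' a := by
        intro a
        have := hx a
        rw [hchiV' a, hchiW' a, chi_congr e a] at this
        exact add_left_cancel this
      have hrV : finrank ℂ V = finrank ℂ S + finrank ℂ V' := by
        rw [← LinearEquiv.finrank_eq (eV.restrictScalars ℂ), Module.finrank_prod]
      have hrW : finrank ℂ W = finrank ℂ S' + finrank ℂ W' := by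
        rw [← LinearEquiv.finrank_eq (eW.restrictScalars ℂ), Module.finrank_prod]
      have hS1 : 0 < finrank ℂ S := Module.finrank_pos_iff.mpr hSnt
      have hS'1 : 0 < finrank ℂ S' := Module.finrank_pos_iff.mpr hS'nt
      have hd' : finrank ℂ V' + finrank ℂ W' ≤ d := by omega
      obtain ⟨e'⟩ := ih V' W' hd' hxa
      exact ⟨(eV.symm.trans (LinearEquiv.prodCongr e e')).trans eW⟩

end BNaux

/-- The representation of `G` on `ℂⁿ` associated to a homomorphism `G →* GL(n, ℂ)`. -/
noncomputable def glRep {n : ℕ} {G : Type*} [Group G]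
    (ρ : G →* Matrix.GeneralLinearGroup (Fin n) ℂ) :
    Representation ℂ G (Fin n → ℂ) :=
  ((Matrix.toLinAlgEquiv' : Matrix (Fin n) (Fin n) ℂ ≃ₐ[ℂ]
      Module.End ℂ (Fin n → ℂ)).toAlgHom.toRingHom.toMonoidHom).comp
    ((Units.coeHom (Matrix (Fin n) (Fin n) ℂ)).comp ρ)


namespace BNaux

lemma glRep_apply {n : ℕ} {G : Type*} [Group G] (ρ : G →* Matrix.GeneralLinearGroup (Fin n) ℂ)
    (g : G) (v : Fin n → ℂ) : glRep ρ g v = Matrix.toLin' (ρ g : Matrix (Fin n) (Fin n) ℂ) v := rfl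

lemma trace_toLin' {n : ℕ} (M : Matrix (Fin n) (Fin n) ℂ) :
    LinearMap.trace ℂ (Fin n → ℂ) (Matrix.toLin' M) = M.trace := by
  rw [LinearMap.trace_eq_matrix_trace ℂ (Pi.basisFun ℂ (Fin n)),
    LinearMap.toMatrix_eq_toMatrix', LinearMap.toMatrix'_toLin']

section Main
variable {n : ℕ} {G : Type*} [Group G] (σ : ℂ ≃+* ℂ)

private noncomputable def tfun (x : MonoidAlgebra ℂ G) : MonoidAlgebra ℂ G :=
  MonoidAlgebra.map ((σ : ℂ →+* ℂ) : ℂ →+ ℂ) x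

private lemma tfun_single (g : G) (c : ℂ) :
    tfun σ (MonoidAlgebra.single g c) = MonoidAlgebra.single g (σ c) :=
  MonoidAlgebra.map_single _ _ _

private lemma tfun_add (x y : MonoidAlgebra ℂ G) : tfun σ (x + y) = tfun σ x + tfun σ y :=
  MonoidAlgebra.map_add _ x y

private lemma tmul (x y : MonoidAlgebra ℂ G) : tfun σ (x * y) = tfun σ x * tfun σ y :=
  MonoidAlgebra.map_mul (σ : ℂ →+* ℂ) x y

/-- the coefficientwise ring automorphism of the monoid algebra -/
noncomputable def tau : MonoidAlgebra ℂ G ≃+* MonoidAlgebra ℂ G where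
  __ := MonoidAlgebra.mapAddEquiv G (σ : ℂ ≃+ ℂ)
  map_mul' x y := tmul σ x y

lemma tau_single (g : G) (c : ℂ) :
    tau σ (MonoidAlgebra.single g c) = MonoidAlgebra.single g (σ c) := tfun_single σ g c


section Rep
variable {n : ℕ} {G : Type*} [Group G]

lemma sigma_mulVec (M : Matrix (Fin n) (Fin n) ℂ) (v : Fin n → ℂ) (i : Fin n) :
    σ (M.mulVec v i) = (M.map σ).mulVec (fun j => σ (v j)) i := by
  simp [Matrix.mulVec, dotProduct, map_sum, Matrix.map_apply, map_mul]

end Rep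
end Main
end BNaux

open BNaux

theorem conjugate_rep_iso_of_fixes_traces
    (n : ℕ) (G : Type*) [Group G] (ρ : G →* Matrix.GeneralLinearGroup (Fin n) ℂ)
    (hss : IsSemisimpleModule (MonoidAlgebra ℂ G) (glRep ρ).asModule)
    (σ : ℂ ≃+* ℂ)
    (hσ : ∀ g, σ ((ρ g : Matrix (Fin n) (Fin n) ℂ).trace) =
      (ρ g : Matrix (Fin n) (Fin n) ℂ).trace) :
    ∃ T : Matrix.GeneralLinearGroup (Fin n) ℂ, ∀ g,
      (ρ g : Matrix (Fin n) (Fin n) ℂ).map σ =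
        (T : Matrix (Fin n) (Fin n) ℂ) * (ρ g : Matrix (Fin n) (Fin n) ℂ) *
          (↑(T⁻¹) : Matrix (Fin n) (Fin n) ℂ) := by
  classical
  set A := MonoidAlgebra ℂ G with hA
  set ρσ : G →* Matrix.GeneralLinearGroup (Fin n) ℂ :=
    (Units.map ((σ : ℂ →+* ℂ).mapMatrix (m := Fin n)).toMonoidHom).comp ρ with hρσ
  have hρσcoe : ∀ g : G, (ρσ g : Matrix (Fin n) (Fin n) ℂ)
      = (ρ g : Matrix (Fin n) (Fin n) ℂ).map σ := fun g => rfl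
  set ρ' := glRep ρ with hρ'
  set ρσ' := glRep ρσ with hρσ'
  set V := ρ'.asModule with hV
  set W := ρσ'.asModule with hW
  -- ℂ-linear identification with `Fin n → ℂ`
  let eV : V ≃ₗ[ℂ] (Fin n → ℂ) :=
    { ρ'.asModuleEquiv with map_smul' := fun c x => rfl }
  let eW : W ≃ₗ[ℂ] (Fin n → ℂ) :=
    { ρσ'.asModuleEquiv with map_smul' := fun c x => rfl }
  haveI tV : IsScalarTower ℂ A V := ⟨fun c a x => by
    apply ρ'.asModuleEquiv.injective
    rw [ρ'.asModuleEquiv_map_smul,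
      show ρ'.asModuleEquiv (c • (a • x)) = c • ρ'.asModuleEquiv (a • x) from rfl,
      ρ'.asModuleEquiv_map_smul, map_smul]
    rfl⟩
  haveI tW : IsScalarTower ℂ A W := ⟨fun c a x => by
    apply ρσ'.asModuleEquiv.injective
    rw [ρσ'.asModuleEquiv_map_smul,
      show ρσ'.asModuleEquiv (c • (a • x)) = c • ρσ'.asModuleEquiv (a • x) from rfl,
      ρσ'.asModuleEquiv_map_smul, map_smul]
    rfl⟩
  haveI : FiniteDimensional ℂ V := Module.Finite.equiv eV.symm
  haveI : FiniteDimensional ℂ W := Module.Finite.equiv eW.symm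
  -- the semilinear comparison map, used to transfer semisimplicity
  have sf_aux : ∀ (g : G) (v : Fin n → ℂ),
      (fun i => σ (ρ' g v i)) = ρσ' g (fun i => σ (v i)) := by
    intro g v
    funext i
    rw [show ρ' g v = Matrix.toLin' (ρ g : Matrix (Fin n) (Fin n) ℂ) v from rfl,
      show ρσ' g (fun i => σ (v i))
        = Matrix.toLin' ((ρ g : Matrix (Fin n) (Fin n) ℂ).map σ) (fun i => σ (v i)) from rfl]
    rw [Matrix.toLin'_apply, Matrix.toLin'_apply]
    exact sigma_mulVec σ _ v i
  have sf_add : ∀ u v : Fin n → ℂ,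
      ρσ'.asModuleEquiv.symm (fun i => σ ((u + v) i))
        = ρσ'.asModuleEquiv.symm (fun i => σ (u i)) + ρσ'.asModuleEquiv.symm (fun i => σ (v i)) := by
    intro u v
    rw [show (fun i => σ ((u + v) i)) = (fun i => σ (u i)) + (fun i => σ (v i)) by
      funext i; simp]
    rw [map_add]
  have sf_smul : ∀ (a : A) (x : V),
      ρσ'.asModuleEquiv.symm (fun i => σ (ρ'.asModuleEquiv (a • x) i))
        = (tau σ : A ≃+* A) a • ρσ'.asModuleEquiv.symm (fun i => σ (ρ'.asModuleEquiv x i)) := by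
    intro a x
    set y : W := ρσ'.asModuleEquiv.symm (fun i => σ (ρ'.asModuleEquiv x i)) with hy
    let Φ₁ : A →+ W :=
      { toFun := fun a => ρσ'.asModuleEquiv.symm (fun i => σ (ρ'.asModuleEquiv (a • x) i))
        map_zero' := by
          rw [zero_smul, show ρ'.asModuleEquiv (0 : V) = 0 from map_zero _,
            show (fun i => σ ((0 : Fin n → ℂ) i)) = (0 : Fin n → ℂ) by funext i; simp,
            map_zero]
        map_add' := fun a b => by
          rw [add_smul, show ρ'.asModuleEquiv (a • x + b • x)
              = ρ'.asModuleEquiv (a • x) + ρ'.asModuleEquiv (b • x) from map_add _ _ _]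
          exact sf_add _ _ }
    let Φ₂ : A →+ W :=
      { toFun := fun a => (tau σ : A ≃+* A) a • y
        map_zero' := by rw [map_zero, zero_smul]
        map_add' := fun a b => by rw [map_add, add_smul] }
    have hext : Φ₁ = Φ₂ := by
      apply MonoidAlgebra.addMonoidHom_ext
      intro g c
      show ρσ'.asModuleEquiv.symm
          (fun i => σ (ρ'.asModuleEquiv ((MonoidAlgebra.single g c : A) • x) i))
        = (tau σ : A ≃+* A) (MonoidAlgebra.single g c) • y
      apply ρσ'.asModuleEquiv.injective
      rw [tau_single, ρσ'.asModuleEquiv_map_smul, Representation.asAlgebraHom_single,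
        ρσ'.asModuleEquiv.apply_symm_apply, hy, ρσ'.asModuleEquiv.apply_symm_apply,
        ρ'.asModuleEquiv_map_smul, Representation.asAlgebraHom_single]
      funext i
      have h := congrFun (sf_aux g (ρ'.asModuleEquiv x)) i
      simp only [LinearMap.smul_apply, Pi.smul_apply, smul_eq_mul, map_mul] at h ⊢
      rw [h]
    exact DFunLike.congr_fun hext a
  let sf : V →ₛₗ[((tau σ : A ≃+* A) : A →+* A)] W :=
    { toFun := fun x => ρσ'.asModuleEquiv.symm (fun i => σ (ρ'.asModuleEquiv x i))
      map_add' := fun x y => by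
        rw [show ρ'.asModuleEquiv (x + y) = ρ'.asModuleEquiv x + ρ'.asModuleEquiv y from
          map_add _ x y]
        rw [show (fun i => σ ((ρ'.asModuleEquiv x + ρ'.asModuleEquiv y) i))
            = (fun i => σ (ρ'.asModuleEquiv x i)) + (fun i => σ (ρ'.asModuleEquiv y i)) by
          funext i; simp]
        rw [map_add]
      map_smul' := fun a x => sf_smul a x }
  have hbij : Function.Bijective sf := by
    constructor
    · intro x y h
      apply ρ'.asModuleEquiv.injective
      funext i
      have h2 := congrFun (ρσ'.asModuleEquiv.symm.injective
        (show ρσ'.asModuleEquiv.symm (fun i => σ (ρ'.asModuleEquiv x i))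
            = ρσ'.asModuleEquiv.symm (fun i => σ (ρ'.asModuleEquiv y i)) from h)) i
      exact σ.injective h2
    · intro w
      refine ⟨ρ'.asModuleEquiv.symm (fun i => σ.symm (ρσ'.asModuleEquiv w i)), ?_⟩
      show ρσ'.asModuleEquiv.symm (fun i => σ (ρ'.asModuleEquiv
        (ρ'.asModuleEquiv.symm (fun i => σ.symm (ρσ'.asModuleEquiv w i))) i)) = w
      rw [ρ'.asModuleEquiv.apply_symm_apply]
      rw [show (fun i => σ (σ.symm (ρσ'.asModuleEquiv w i))) = ρσ'.asModuleEquiv w by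
        funext i; rw [σ.apply_symm_apply]]
      exact ρσ'.asModuleEquiv.symm_apply_apply w
  haveI hsurj : RingHomSurjective ((tau σ : A ≃+* A) : A →+* A) :=
    ⟨(tau σ : A ≃+* A).surjective⟩
  haveI hssW : IsSemisimpleModule A W := by
    haveI : ComplementedLattice (Submodule A V) := (isSemisimpleModule_iff A V).mp hss
    exact (isSemisimpleModule_iff A W).mpr (Submodule.orderIsoMapComapOfBijective sf hbij).complementedLattice
  -- character computations
  have hchiV : ∀ (g : G) (c : ℂ), chi A V (MonoidAlgebra.single g c)
      = c * (ρ g : Matrix (Fin n) (Fin n) ℂ).trace := by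
    intro g c
    have hconj : lap A V (MonoidAlgebra.single g c)
        = eV.symm.conj (c • Matrix.toLin' (ρ g : Matrix (Fin n) (Fin n) ℂ)) := by
      ext x
      simp only [lap_apply, LinearEquiv.conj_apply, LinearEquiv.symm_symm,
        LinearMap.comp_apply, LinearEquiv.coe_coe]
      apply eV.injective
      rw [eV.apply_symm_apply]
      rw [show eV ((MonoidAlgebra.single g c : A) • x)
          = ρ'.asModuleEquiv ((MonoidAlgebra.single g c : A) • x) from rfl,
        ρ'.asModuleEquiv_map_smul, Representation.asAlgebraHom_single]
      rfl
    rw [show chi A V (MonoidAlgebra.single g c)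
        = LinearMap.trace ℂ V (lap A V (MonoidAlgebra.single g c)) from rfl, hconj,
      LinearMap.trace_conj', map_smul, trace_toLin']
    rfl
  have hchiW : ∀ (g : G) (c : ℂ), chi A W (MonoidAlgebra.single g c)
      = c * ((ρ g : Matrix (Fin n) (Fin n) ℂ).map σ).trace := by
    intro g c
    have hconj : lap A W (MonoidAlgebra.single g c)
        = eW.symm.conj (c • Matrix.toLin' ((ρ g : Matrix (Fin n) (Fin n) ℂ).map σ)) := by
      ext x
      simp only [lap_apply, LinearEquiv.conj_apply, LinearEquiv.symm_symm,
        LinearMap.comp_apply, LinearEquiv.coe_coe]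
      apply eW.injective
      rw [eW.apply_symm_apply]
      rw [show eW ((MonoidAlgebra.single g c : A) • x)
          = ρσ'.asModuleEquiv ((MonoidAlgebra.single g c : A) • x) from rfl,
        ρσ'.asModuleEquiv_map_smul, Representation.asAlgebraHom_single]
      rfl
    rw [show chi A W (MonoidAlgebra.single g c)
        = LinearMap.trace ℂ W (lap A W (MonoidAlgebra.single g c)) from rfl, hconj,
      LinearMap.trace_conj', map_smul, trace_toLin']
    rfl
  have htrmap : ∀ g : G, ((ρ g : Matrix (Fin n) (Fin n) ℂ).map σ).trace
      = σ ((ρ g : Matrix (Fin n) (Fin n) ℂ).trace) := by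
    intro g
    simp [Matrix.trace, Matrix.diag, map_sum, Matrix.map_apply]
  have hchi : ∀ a : A, chi A V a = chi A W a := by
    have : chi A V = chi A W := by
      apply MonoidAlgebra.lhom_ext'
      intro g
      apply LinearMap.ext_ring
      show chi A V (MonoidAlgebra.single g 1) = chi A W (MonoidAlgebra.single g 1)
      rw [hchiV, hchiW, htrmap, hσ]
    exact fun a => congrFun (congrArg DFunLike.coe this) a
  -- apply Brauer–Nesbitt
  obtain ⟨e₀⟩ := bn (A := A) (finrank ℂ V + finrank ℂ W) V W le_rfl hchi
  -- build the intertwining ℂ-linear automorphism of ℂⁿ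
  let E : (Fin n → ℂ) ≃ₗ[ℂ] (Fin n → ℂ) :=
    (eV.symm.trans (e₀.restrictScalars ℂ)).trans eW
  have hE : ∀ (g : G) (v : Fin n → ℂ), E (ρ' g v) = ρσ' g (E v) := by
    intro g v
    show eW (e₀ (eV.symm (ρ' g v))) = ρσ' g (eW (e₀ (eV.symm v)))
    have h1 : eV.symm (ρ' g v) = (MonoidAlgebra.of ℂ G g : A) • eV.symm v :=
      ρ'.asModuleEquiv_symm_map_rho g v
    rw [h1, map_smul]
    rw [show eW ((MonoidAlgebra.of ℂ G g : A) • e₀ (eV.symm v))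
        = ρσ'.asAlgebraHom (MonoidAlgebra.of ℂ G g) (eW (e₀ (eV.symm v))) from
      ρσ'.asModuleEquiv_map_smul _ _]
    rw [Representation.asAlgebraHom_of]
  -- the matrices
  set Tm : Matrix (Fin n) (Fin n) ℂ := LinearMap.toMatrix' (E : (Fin n → ℂ) →ₗ[ℂ] (Fin n → ℂ))
    with hTm
  set Tm' : Matrix (Fin n) (Fin n) ℂ :=
    LinearMap.toMatrix' (E.symm : (Fin n → ℂ) →ₗ[ℂ] (Fin n → ℂ)) with hTm'
  have hTT' : Tm * Tm' = 1 := by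
    rw [hTm, hTm', ← LinearMap.toMatrix'_comp]
    rw [show (E : (Fin n → ℂ) →ₗ[ℂ] (Fin n → ℂ)) ∘ₗ (E.symm : (Fin n → ℂ) →ₗ[ℂ] (Fin n → ℂ))
        = LinearMap.id by ext v; simp]
    exact LinearMap.toMatrix'_id
  have hT'T : Tm' * Tm = 1 := by
    rw [hTm, hTm', ← LinearMap.toMatrix'_comp]
    rw [show (E.symm : (Fin n → ℂ) →ₗ[ℂ] (Fin n → ℂ)) ∘ₗ (E : (Fin n → ℂ) →ₗ[ℂ] (Fin n → ℂ))
        = LinearMap.id by ext v; simp]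
    exact LinearMap.toMatrix'_id
  refine ⟨⟨Tm, Tm', hTT', hT'T⟩, fun g => ?_⟩
  have hcomp : (E : (Fin n → ℂ) →ₗ[ℂ] (Fin n → ℂ)) ∘ₗ
        Matrix.toLin' (ρ g : Matrix (Fin n) (Fin n) ℂ)
      = Matrix.toLin' ((ρ g : Matrix (Fin n) (Fin n) ℂ).map σ) ∘ₗ
        (E : (Fin n → ℂ) →ₗ[ℂ] (Fin n → ℂ)) := by
    apply LinearMap.ext
    intro v
    simp only [LinearMap.coe_comp, Function.comp_apply, LinearEquiv.coe_coe]
    have := hE g v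
    rw [show ρ' g v = Matrix.toLin' (ρ g : Matrix (Fin n) (Fin n) ℂ) v from rfl] at this
    rw [show ρσ' g (E v) = Matrix.toLin' ((ρ g : Matrix (Fin n) (Fin n) ℂ).map σ) (E v)
      from rfl] at this
    exact this
  have hmat := congrArg LinearMap.toMatrix' hcomp
  rw [LinearMap.toMatrix'_comp, LinearMap.toMatrix'_comp, LinearMap.toMatrix'_toLin',
    LinearMap.toMatrix'_toLin'] at hmat
  -- hmat : Tm * ρ g = (ρ g).map σ * Tm
  show (ρ g : Matrix (Fin n) (Fin n) ℂ).map σ = Tm * (ρ g : Matrix (Fin n) (Fin n) ℂ) * Tm'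
  rw [hmat, Matrix.mul_assoc, hTT', Matrix.mul_one]
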